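/- Let 0 < c < a < 1 with a + c < 1, let t ∈ (0,1) solve a^t + c^t = 1, and let b, d ∈ (0,1). Then for every k ≥ 1 and every word i ∈ {1,2}^k with n1 ones: max{ (a^{n1} c^{k−n1})^t (b^{n1} d^{k−n1})^{1−t}, b^{n1} d^{k−n1} } ≤ (a^{n1} c^{k−n1})^t (b^{n1} d^{k−n1})^{1−t} + b^{n1} d^{k−n1}, and consequently lim_{k→∞} ( Σ_{i∈{1,2}^k} max{β1(i)^t β2(i)^{1−t}, β2(i)} )^{1/k} = max{ a^t b^{1−t} + c^t d^{1−t}, b + d }. -/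

import Mathlib

open Filter

/-- The number of ones in the word `i` (coding the symbol `1` by `0 : Fin 2`). -/
def numOnes {k : ℕ} (i : Fin k → Fin 2) : ℕ :=
  (Finset.univ.filter fun j => i j = 0).card

lemma rpow_pow_comm (x : ℝ) (hx : 0 ≤ x) (n : ℕ) (s : ℝ) : (x ^ n) ^ s = (x ^ s) ^ n := by
  rw [← Real.rpow_natCast x n, ← Real.rpow_natCast (x ^ s) n, ← Real.rpow_mul hx,
    ← Real.rpow_mul hx, mul_comm]

lemma sum_pow_ones (x y : ℝ) (k : ℕ) :
    ∑ i : Fin k → Fin 2, x ^ numOnes i * y ^ (k - numOnes i) = (x + y) ^ k := by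
  have h : (x + y) ^ k = ∏ j : Fin k, ∑ v : Fin 2, (if v = 0 then x else y) := by
    simp [Fin.sum_univ_two]
  rw [h, Finset.prod_univ_sum, Fintype.piFinset_univ]
  refine Finset.sum_congr rfl fun i _ => ?_
  rw [Finset.prod_ite (fun _ => x) (fun _ => y), Finset.prod_const, Finset.prod_const]
  have hcard : (Finset.univ.filter fun j => ¬ i j = 0).card = k - numOnes i := by
    have := Finset.card_filter_add_card_filter_not (s := (Finset.univ : Finset (Fin k)))
      (p := fun j => i j = 0)
    simp only [Finset.card_univ, Fintype.card_fin] at this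
    unfold numOnes
    omega
  rw [hcard]; rfl

theorem stmt11 (a c : ℝ) (h0c : 0 < c) (hca : c < a) (ha1 : a < 1) (hac : a + c < 1)
    (t : ℝ) (ht : t ∈ Set.Ioo (0 : ℝ) 1) (hts : a ^ t + c ^ t = 1)
    (b d : ℝ) (hb : b ∈ Set.Ioo (0 : ℝ) 1) (hd : d ∈ Set.Ioo (0 : ℝ) 1) :
    (∀ k : ℕ, 1 ≤ k → ∀ i : Fin k → Fin 2,
      max ((a ^ numOnes i * c ^ (k - numOnes i) : ℝ) ^ t *
            (b ^ numOnes i * d ^ (k - numOnes i) : ℝ) ^ (1 - t))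
          ((b ^ numOnes i * d ^ (k - numOnes i) : ℝ)) ≤
        (a ^ numOnes i * c ^ (k - numOnes i) : ℝ) ^ t *
            (b ^ numOnes i * d ^ (k - numOnes i) : ℝ) ^ (1 - t) +
          (b ^ numOnes i * d ^ (k - numOnes i) : ℝ)) ∧
    Tendsto
      (fun k : ℕ =>
        (∑ i : Fin k → Fin 2,
            max ((a ^ numOnes i * c ^ (k - numOnes i) : ℝ) ^ t *
                  (b ^ numOnes i * d ^ (k - numOnes i) : ℝ) ^ (1 - t))
                ((b ^ numOnes i * d ^ (k - numOnes i) : ℝ))) ^ ((1 : ℝ) / k))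
      atTop (nhds (max (a ^ t * b ^ (1 - t) + c ^ t * d ^ (1 - t)) (b + d))) := by
  obtain ⟨hb0, hb1⟩ := hb
  obtain ⟨hd0, hd1⟩ := hd
  have ha0 : 0 < a := h0c.trans hca
  -- positivity of the per-word quantities
  have hβ1 : ∀ k : ℕ, ∀ i : Fin k → Fin 2,
      0 < (a ^ numOnes i * c ^ (k - numOnes i) : ℝ) ^ t *
          (b ^ numOnes i * d ^ (k - numOnes i) : ℝ) ^ (1 - t) := by
    intro k i; positivity
  have hβ2 : ∀ k : ℕ, ∀ i : Fin k → Fin 2,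
      0 < (b ^ numOnes i * d ^ (k - numOnes i) : ℝ) := by
    intro k i; positivity
  constructor
  · intro k _ i
    exact max_le (le_add_of_nonneg_right (hβ2 k i).le)
      (le_add_of_nonneg_left (hβ1 k i).le)
  · set A : ℝ := a ^ t * b ^ (1 - t) + c ^ t * d ^ (1 - t) with hA
    set B : ℝ := b + d with hB
    have hA0 : 0 < A := by positivity
    have hB0 : 0 < B := by positivity
    set M : ℝ := max A B with hM
    have hM0 : 0 < M := lt_of_lt_of_le hA0 (le_max_left _ _)
    -- per-word rewrite of the first term
    have hterm : ∀ k : ℕ, ∀ i : Fin k → Fin 2,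
        (a ^ numOnes i * c ^ (k - numOnes i) : ℝ) ^ t *
          (b ^ numOnes i * d ^ (k - numOnes i) : ℝ) ^ (1 - t) =
        (a ^ t * b ^ (1 - t)) ^ numOnes i * (c ^ t * d ^ (1 - t)) ^ (k - numOnes i) := by
      intro k i
      rw [Real.mul_rpow (by positivity) (by positivity),
        Real.mul_rpow (by positivity) (by positivity),
        rpow_pow_comm a ha0.le, rpow_pow_comm c h0c.le,
        rpow_pow_comm b hb0.le, rpow_pow_comm d hd0.le,
        mul_pow, mul_pow]
      ring
    set S : ℕ → ℝ := fun k => ∑ i : Fin k → Fin 2,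
        max ((a ^ numOnes i * c ^ (k - numOnes i) : ℝ) ^ t *
              (b ^ numOnes i * d ^ (k - numOnes i) : ℝ) ^ (1 - t))
            ((b ^ numOnes i * d ^ (k - numOnes i) : ℝ)) with hS
    have hsum1 : ∀ k : ℕ, (∑ i : Fin k → Fin 2,
        (a ^ numOnes i * c ^ (k - numOnes i) : ℝ) ^ t *
          (b ^ numOnes i * d ^ (k - numOnes i) : ℝ) ^ (1 - t)) = A ^ k := by
      intro k
      rw [Finset.sum_congr rfl fun i _ => hterm k i, sum_pow_ones]
    have hsum2 : ∀ k : ℕ, (∑ i : Fin k → Fin 2,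
        (b ^ numOnes i * d ^ (k - numOnes i) : ℝ)) = B ^ k :=
      fun k => sum_pow_ones b d k
    have hlow : ∀ k : ℕ, M ^ k ≤ S k := by
      intro k
      rcases max_choice A B with h | h
      · calc M ^ k = A ^ k := by rw [hM, h]
          _ = _ := (hsum1 k).symm
          _ ≤ S k := Finset.sum_le_sum fun i _ => le_max_left _ _
      · calc M ^ k = B ^ k := by rw [hM, h]
          _ = _ := (hsum2 k).symm
          _ ≤ S k := Finset.sum_le_sum fun i _ => le_max_right _ _
    have hhigh : ∀ k : ℕ, S k ≤ 2 * M ^ k := by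
      intro k
      have h1 : S k ≤ A ^ k + B ^ k := by
        rw [← hsum1 k, ← hsum2 k, ← Finset.sum_add_distrib]
        exact Finset.sum_le_sum fun i _ =>
          max_le (le_add_of_nonneg_right (hβ2 k i).le)
            (le_add_of_nonneg_left (hβ1 k i).le)
      have h2 : A ^ k ≤ M ^ k := pow_le_pow_left₀ hA0.le (le_max_left _ _) k
      have h3 : B ^ k ≤ M ^ k := pow_le_pow_left₀ hB0.le (le_max_right _ _) k
      linarith
    -- the limit
    have hpowM : ∀ k : ℕ, 1 ≤ k → (M ^ k : ℝ) ^ ((1:ℝ)/k) = M := by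
      intro k hk
      rw [← Real.rpow_natCast M k, ← Real.rpow_mul hM0.le,
        mul_one_div, div_self (by positivity : (k:ℝ) ≠ 0), Real.rpow_one]
    have hup : Tendsto (fun k : ℕ => (2:ℝ) ^ ((1:ℝ)/k) * M) atTop (nhds M) := by
      have h1 : Tendsto (fun k : ℕ => (1:ℝ)/k) atTop (nhds 0) :=
        tendsto_one_div_atTop_nhds_zero_nat
      have h2 : Tendsto (fun k : ℕ => (2:ℝ) ^ ((1:ℝ)/k)) atTop (nhds 1) := by
        have := (Real.continuousAt_const_rpow (by norm_num : (2:ℝ) ≠ 0)).tendsto.comp h1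
        simpa [Function.comp_def, Real.rpow_zero] using this
      simpa using h2.mul_const M
    have hgoal : Tendsto (fun k : ℕ => (S k) ^ ((1:ℝ)/k)) atTop (nhds M) := by
      refine tendsto_of_tendsto_of_tendsto_of_le_of_le' tendsto_const_nhds hup ?_ ?_
      · filter_upwards [eventually_ge_atTop 1] with k hk
        calc M = (M ^ k : ℝ) ^ ((1:ℝ)/k) := (hpowM k hk).symm
          _ ≤ (S k) ^ ((1:ℝ)/k) :=
            Real.rpow_le_rpow (by positivity) (hlow k) (by positivity)
      · filter_upwards [eventually_ge_atTop 1] with k hk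
        calc (S k) ^ ((1:ℝ)/k) ≤ (2 * M ^ k : ℝ) ^ ((1:ℝ)/k) :=
            Real.rpow_le_rpow (le_trans (by positivity) (hlow k)) (hhigh k) (by positivity)
          _ = (2:ℝ) ^ ((1:ℝ)/k) * (M ^ k : ℝ) ^ ((1:ℝ)/k) :=
            Real.mul_rpow (by norm_num) (by positivity)
          _ = (2:ℝ) ^ ((1:ℝ)/k) * M := by rw [hpowM k hk]
    exact hgoal
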